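/- Let f ∈ 𝔽_q[X,Y] be a nonzero polynomial all of whose monomials X^i Y^j satisfy i ≥ 0, j ≥ 0 and r·i + j ≤ q−2 (i.e. the support of f lies in the lattice points of □_0). Suppose c₁, …, c_A ∈ 𝔽_q^* are exactly the pairwise distinct elements c of 𝔽_q^* such that f(c, y) = 0 for all y ∈ 𝔽_q^*. Then for every other c' ∈ 𝔽_q^* (c' ∉ {c₁, …, c_A}), the number of y ∈ 𝔽_q^* with f(c', y) = 0 is at most q − 2 − A·r. Consequently f has at most A(q−1) + (q−1−A)(q−2−Ar) zeros in 𝔽_q^* × 𝔽_q^*. -/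

import Mathlib

open Finset Polynomial

noncomputable def colPoly {F : Type*} [Field F] (f : MvPolynomial (Fin 2) F) (u : F) :
    Polynomial F :=
  ∑ m ∈ f.support, Polynomial.C (MvPolynomial.coeff m f * u ^ (m 0)) * Polynomial.X ^ (m 1)

noncomputable def aPoly {F : Type*} [Field F] (f : MvPolynomial (Fin 2) F) (j : ℕ) :
    Polynomial F :=
  ∑ m ∈ f.support.filter (fun m => m 1 = j),
    Polynomial.C (MvPolynomial.coeff m f) * Polynomial.X ^ (m 0)

lemma eval_colPoly {F : Type*} [Field F] (f : MvPolynomial (Fin 2) F) (u y : F) :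
    Polynomial.eval y (colPoly f u) = MvPolynomial.eval ![u, y] f := by
  rw [MvPolynomial.eval_eq', colPoly, Polynomial.eval_finset_sum]
  refine Finset.sum_congr rfl fun m _ => ?_
  rw [Fin.prod_univ_two]
  simp only [Polynomial.eval_mul, Polynomial.eval_C, Polynomial.eval_pow, Polynomial.eval_X,
    Matrix.cons_val_zero, Matrix.cons_val_one, Matrix.head_cons]
  ring

lemma coeff_colPoly {F : Type*} [Field F] (f : MvPolynomial (Fin 2) F) (u : F) (j : ℕ) :
    (colPoly f u).coeff j = Polynomial.eval u (aPoly f j) := by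
  rw [colPoly, aPoly, Polynomial.finset_sum_coeff, Polynomial.eval_finset_sum,
    Finset.sum_filter]
  refine Finset.sum_congr rfl fun m _ => ?_
  rw [Polynomial.coeff_C_mul, Polynomial.coeff_X_pow]
  by_cases h : m 1 = j
  · subst h; simp
  · rw [if_neg fun hh => h hh.symm, if_neg h, mul_zero]

lemma card_units_roots_le {F : Type*} [Field F] [Fintype F] (P : Polynomial F) (hP : P ≠ 0) :
    {y : Fˣ | Polynomial.eval (y : F) P = 0}.ncard ≤ P.natDegree := by
  classical
  have h1 : {y : Fˣ | Polynomial.eval (y : F) P = 0}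
      = ↑(Finset.univ.filter fun y : Fˣ => Polynomial.eval (y : F) P = 0) := by
    ext y; simp
  rw [h1, Set.ncard_coe_finset]
  set s := Finset.univ.filter fun y : Fˣ => Polynomial.eval (y : F) P = 0 with hs
  have h2 : s.card = (s.image (fun y : Fˣ => (y : F))).card :=
    (Finset.card_image_of_injective s Units.val_injective).symm
  rw [h2]
  apply Polynomial.card_le_degree_of_subset_roots
  intro x hx
  simp only [Finset.mem_val, Finset.mem_image] at hx
  obtain ⟨y, hy, rfl⟩ := hx
  rw [Polynomial.mem_roots hP]
  exact (Finset.mem_filter.mp hy).2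

theorem zeros_on_strata_and_total_zeros_bound
    {F : Type*} [Field F] [Fintype F] (q : ℕ) (hq : q = Fintype.card F)
    (r : ℕ) (hr : 0 < r) (hdvd : r ∣ (q - 2))
    (f : MvPolynomial (Fin 2) F) (hf : f ≠ 0)
    (hsupp : ∀ m ∈ f.support, r * m 0 + m 1 ≤ q - 2)
    (A : ℕ) (c : Fin A → Fˣ) (hc : Function.Injective c)
    (hexact : ∀ u : Fˣ,
      (∀ y : Fˣ, MvPolynomial.eval ![(u : F), (y : F)] f = 0) ↔ ∃ k, c k = u) :
    (∀ u : Fˣ, (¬ ∃ k, c k = u) →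
      (({y : Fˣ | MvPolynomial.eval ![(u : F), (y : F)] f = 0}.ncard : ℤ)
        ≤ (q : ℤ) - 2 - (A : ℤ) * (r : ℤ))) ∧
    (({t : Fˣ × Fˣ | MvPolynomial.eval ![(t.1 : F), (t.2 : F)] f = 0}.ncard : ℤ)
      ≤ (A : ℤ) * ((q : ℤ) - 1)
        + ((q : ℤ) - 1 - (A : ℤ)) * ((q : ℤ) - 2 - (A : ℤ) * (r : ℤ))) := by
  classical
  have hq2 : 2 ≤ q := by rw [hq]; exact Fintype.one_lt_card
  have hcardU : Fintype.card Fˣ = q - 1 := by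
    rw [hq, ← Nat.card_eq_fintype_card, ← Nat.card_eq_fintype_card, Nat.card_units]
  -- degree bound for the coefficient polynomials
  have ha_deg : ∀ j, (aPoly f j).natDegree ≤ (q - 2 - j) / r := by
    intro j
    apply Polynomial.natDegree_sum_le_of_forall_le
    intro m hm
    rw [Finset.mem_filter] at hm
    have h1 := hsupp m hm.1
    refine (Polynomial.natDegree_C_mul_le _ _).trans ?_
    rw [Polynomial.natDegree_X_pow, Nat.le_div_iff_mul_le hr, mul_comm]
    have : r * m 0 + j ≤ q - 2 := by rw [← hm.2]; exact h1
    exact Nat.le_sub_of_add_le this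
  -- if a_j ≠ 0 then j ≤ q - 2
  have ha_j : ∀ j, aPoly f j ≠ 0 → j ≤ q - 2 := by
    intro j hj
    by_contra hcon
    apply hj
    rw [aPoly]
    have : f.support.filter (fun m => m 1 = j) = ∅ := by
      apply Finset.filter_eq_empty_iff.mpr
      intro m hm h1
      have := hsupp m hm
      omega
    rw [this, Finset.sum_empty]
  -- degree ≤ q - 2 for column polynomials
  have hdegcol : ∀ u : F, (colPoly f u).natDegree ≤ q - 2 := by
    intro u
    apply Polynomial.natDegree_sum_le_of_forall_le
    intro m hm
    refine (Polynomial.natDegree_C_mul_le _ _).trans ?_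
    rw [Polynomial.natDegree_X_pow]
    exact le_trans (Nat.le_add_left _ _) (hsupp m hm)
  -- columns at c k vanish identically
  have hzero_col : ∀ k, colPoly f ((c k : F)) = 0 := by
    intro k
    apply Polynomial.eq_zero_of_natDegree_lt_card_of_eval_eq_zero _
      (f := (Units.val : Fˣ → F)) Units.val_injective
    · intro y
      rw [eval_colPoly]
      exact (hexact (c k)).mpr ⟨k, rfl⟩ y
    · rw [hcardU]
      exact lt_of_le_of_lt (hdegcol _) (by omega)
  -- the c k are roots of every a_j
  have haroot : ∀ j k, Polynomial.eval ((c k : F)) (aPoly f j) = 0 := by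
    intro j k
    rw [← coeff_colPoly, hzero_col k, Polynomial.coeff_zero]
  -- if a_j ≠ 0 then A ≤ natDegree (a_j)
  have hA_le_deg : ∀ j, aPoly f j ≠ 0 → A ≤ (aPoly f j).natDegree := by
    intro j hj
    have hcZ : (Finset.univ.image (fun k => (c k : F))).card = A := by
      rw [Finset.card_image_of_injective _ (fun a b h => hc (Units.ext h)), Finset.card_univ,
        Fintype.card_fin]
    rw [← hcZ]
    apply Polynomial.card_le_degree_of_subset_roots
    intro x hx
    simp only [Finset.mem_val, Finset.mem_image, Finset.mem_univ, true_and] at hx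
    obtain ⟨k, rfl⟩ := hx
    rw [Polynomial.mem_roots hj]
    exact haroot j k
  -- A * r ≤ q - 2
  have hAr : A * r ≤ q - 2 := by
    obtain ⟨m, hm⟩ := (MvPolynomial.support_nonempty.mpr hf)
    have hane : aPoly f (m 1) ≠ 0 := by
      intro h0
      have hco : (aPoly f (m 1)).coeff (m 0) = MvPolynomial.coeff m f := by
        rw [aPoly, Polynomial.finset_sum_coeff]
        rw [Finset.sum_eq_single m]
        · rw [Polynomial.coeff_C_mul, Polynomial.coeff_X_pow, if_pos rfl, mul_one]
        · intro m' hm' hne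
          rw [Finset.mem_filter] at hm'
          rw [Polynomial.coeff_C_mul, Polynomial.coeff_X_pow, if_neg, mul_zero]
          intro heq
          apply hne
          ext i
          fin_cases i
          · exact heq.symm
          · exact hm'.2
        · intro hmem
          exact absurd (Finset.mem_filter.mpr ⟨hm, (rfl : m 1 = m 1)⟩) hmem
      rw [h0, Polynomial.coeff_zero] at hco
      exact (MvPolynomial.mem_support_iff.mp hm) hco.symm
    have h1 := (hA_le_deg _ hane).trans (ha_deg (m 1))
    rw [Nat.le_div_iff_mul_le hr] at h1
    omega
  -- vanishing of high coefficient polynomials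
  have hvanish : ∀ j, q - 2 - A * r < j → aPoly f j = 0 := by
    intro j hjgt
    by_contra hane
    have h1 := (hA_le_deg _ hane).trans (ha_deg j)
    rw [Nat.le_div_iff_mul_le hr] at h1
    have h2 := ha_j j hane
    omega
  -- improved degree bound for all columns
  have hdeg2 : ∀ u : F, (colPoly f u).natDegree ≤ q - 2 - A * r := by
    intro u
    rw [Polynomial.natDegree_le_iff_coeff_eq_zero]
    intro N hN
    rw [coeff_colPoly, hvanish N hN, Polynomial.eval_zero]
  -- Part 1, nat version
  have hcount : ∀ u : Fˣ, (¬ ∃ k, c k = u) →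
      ({y : Fˣ | MvPolynomial.eval ![(u : F), (y : F)] f = 0}.ncard) ≤ q - 2 - A * r := by
    intro u hu
    have hne : colPoly f (u : F) ≠ 0 := by
      intro h0
      apply hu
      rw [← hexact u]
      intro y
      rw [← eval_colPoly, h0, Polynomial.eval_zero]
    have hseteq : {y : Fˣ | MvPolynomial.eval ![(u : F), (y : F)] f = 0}
        = {y : Fˣ | Polynomial.eval (y : F) (colPoly f (u : F)) = 0} := by
      ext y; simp [eval_colPoly]
    rw [hseteq]
    exact (card_units_roots_le _ hne).trans (hdeg2 _)
  constructor
  · intro u hu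
    have h := hcount u hu
    have hcast : (A : ℤ) * (r : ℤ) = ((A * r : ℕ) : ℤ) := by push_cast; ring
    rw [hcast]
    generalize A * r = B at h hAr ⊢
    omega
  · -- total count
    set Z : Finset (Fˣ × Fˣ) :=
      Finset.univ.filter (fun t => MvPolynomial.eval ![(t.1 : F), (t.2 : F)] f = 0) with hZ
    have hset : {t : Fˣ × Fˣ | MvPolynomial.eval ![(t.1 : F), (t.2 : F)] f = 0}.ncard
        = Z.card := by
      have : {t : Fˣ × Fˣ | MvPolynomial.eval ![(t.1 : F), (t.2 : F)] f = 0} = ↑Z := by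
        ext t; simp [hZ]
      rw [this, Set.ncard_coe_finset]
    have hncard_eq : ∀ u : Fˣ, {y : Fˣ | MvPolynomial.eval ![(u : F), (y : F)] f = 0}.ncard
        = (Finset.univ.filter fun y : Fˣ =>
            MvPolynomial.eval ![(u : F), (y : F)] f = 0).card := by
      intro u
      have : {y : Fˣ | MvPolynomial.eval ![(u : F), (y : F)] f = 0}
          = ↑(Finset.univ.filter fun y : Fˣ =>
              MvPolynomial.eval ![(u : F), (y : F)] f = 0) := by
        ext y; simp
      rw [this, Set.ncard_coe_finset]
    have hfib : Z.card = ∑ u : Fˣ, (Finset.univ.filter fun y : Fˣ =>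
        MvPolynomial.eval ![(u : F), (y : F)] f = 0).card := by
      rw [Finset.card_eq_sum_card_fiberwise (f := Prod.fst) (t := Finset.univ)
        (fun _ _ => Finset.mem_univ _)]
      refine Finset.sum_congr rfl fun u _ => ?_
      have himg : Z.filter (fun t => t.1 = u)
          = (Finset.univ.filter fun y : Fˣ =>
              MvPolynomial.eval ![(u : F), (y : F)] f = 0).image (fun y => (u, y)) := by
        ext ⟨a, b⟩
        simp only [Finset.mem_filter, Finset.mem_image, Finset.mem_univ, true_and, hZ,
          Prod.mk.injEq]
        constructor
        · rintro ⟨h1, rfl⟩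
          exact ⟨b, h1, rfl, rfl⟩
        · rintro ⟨y, h1, rfl, rfl⟩
          exact ⟨h1, rfl⟩
      rw [himg, Finset.card_image_of_injective]
      intro a b hab
      exact (Prod.mk.injEq _ _ _ _ ▸ hab).2
    set n : Fˣ → ℕ := fun u => (Finset.univ.filter fun y : Fˣ =>
        MvPolynomial.eval ![(u : F), (y : F)] f = 0).card with hn
    have hb1 : ∀ u : Fˣ, n u ≤ q - 1 := by
      intro u
      refine (Finset.card_filter_le _ _).trans ?_
      rw [Finset.card_univ, hcardU]
    have hb2 : ∀ u : Fˣ, (¬ ∃ k, c k = u) → n u ≤ q - 2 - A * r := by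
      intro u hu
      have h := hcount u hu
      rw [hncard_eq u] at h
      exact h
    have hsum_le : ∑ u : Fˣ, n u
        ≤ ∑ u : Fˣ, (if ∃ k, c k = u then q - 1 else q - 2 - A * r) := by
      apply Finset.sum_le_sum
      intro u _
      by_cases h : ∃ k, c k = u
      · rw [if_pos h]; exact hb1 u
      · rw [if_neg h]; exact hb2 u h
    have hsplit : ∑ u : Fˣ, (if ∃ k, c k = u then q - 1 else q - 2 - A * r)
        = (Finset.univ.filter fun u : Fˣ => ∃ k, c k = u).card * (q - 1)
          + (Finset.univ.filter fun u : Fˣ => ¬ ∃ k, c k = u).card * (q - 2 - A * r) := by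
      rw [Finset.sum_ite, Finset.sum_const, Finset.sum_const, smul_eq_mul, smul_eq_mul]
    have hcardA : (Finset.univ.filter fun u : Fˣ => ∃ k, c k = u).card = A := by
      have : (Finset.univ.filter fun u : Fˣ => ∃ k, c k = u) = Finset.univ.image c := by
        ext u; simp
      rw [this, Finset.card_image_of_injective _ hc, Finset.card_univ, Fintype.card_fin]
    have hA_le : A ≤ q - 1 := by
      rw [← hcardA]
      refine (Finset.card_filter_le _ _).trans ?_
      rw [Finset.card_univ, hcardU]
    have hcardB : (Finset.univ.filter fun u : Fˣ => ¬ ∃ k, c k = u).card = (q - 1) - A := by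
      have h := Finset.card_filter_add_card_filter_not
        (s := (Finset.univ : Finset Fˣ)) (p := fun u : Fˣ => ∃ k, c k = u)
      rw [Finset.card_univ, hcardU, hcardA] at h
      omega
    have htotal : Z.card ≤ A * (q - 1) + ((q - 1) - A) * (q - 2 - A * r) := by
      rw [hfib]
      calc ∑ u : Fˣ, n u ≤ _ := hsum_le
        _ = _ := hsplit
        _ = A * (q - 1) + ((q - 1) - A) * (q - 2 - A * r) := by rw [hcardA, hcardB]
    rw [hset]
    have hcast : ((A * (q - 1) + ((q - 1) - A) * (q - 2 - A * r) : ℕ) : ℤ)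
        = (A : ℤ) * ((q : ℤ) - 1)
          + ((q : ℤ) - 1 - (A : ℤ)) * ((q : ℤ) - 2 - (A : ℤ) * (r : ℤ)) := by
      push_cast [Nat.cast_sub (show 1 ≤ q by omega), Nat.cast_sub hA_le,
        Nat.cast_sub hAr, Nat.cast_sub hq2]
      ring
    rw [← hcast]
    exact_mod_cast htotal
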